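/- For the principal symbol L = i(Θ I + ξ_x A_x(U) + ξ_y A_y(U)) of the Favrie-Gavrilyuk system in dimension d = 2, explicitly L = i·[[Θ, h ξ^T, 0, 0],[α ξ, Θ I₂, β ξ, 0],[0,0,Θ,0],[0,0,0,Θ]] (a 5×5 matrix in variables (ζ, u_x, u_y, η, w)), with ξ = (ξ_x, ξ_y)^T ≠ 0, the characteristic equation det L = 0 has the root Θ = 0 with multiplicity 3, and the two simple roots Θ = ±√(α h)|ξ|, with corresponding eigenvectors (∓√h |ξ|, √α ξ_x, √α ξ_y, 0, 0) for the simple roots. -/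

import Mathlib

/-- The matrix `M(Θ)` with `L = i·M(Θ)` the principal symbol of the Favrie-Gavrilyuk
system in dimension `d = 2`, in the variables `(ζ, u_x, u_y, η, w)`. -/
def FGsymbol (Θ h α β ξx ξy : ℝ) : Matrix (Fin 5) (Fin 5) ℝ :=
  !![Θ, h * ξx, h * ξy, 0, 0;
     α * ξx, Θ, 0, β * ξx, 0;
     α * ξy, 0, Θ, β * ξy, 0;
     0, 0, 0, Θ, 0;
     0, 0, 0, 0, Θ]

/-- Eigenstructure of the principal symbol: `det L = 0` has the root `Θ = 0` with
multiplicity 3 (i.e. `det M(Θ) = Θ³(Θ² - α h |ξ|²)` with `α h |ξ|² ≠ 0`), and the two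
simple roots `Θ = ±√(αh)|ξ|` with eigenvectors `(∓√h |ξ|, √α ξx, √α ξy, 0, 0)`. -/
theorem FG_principal_symbol_eigenstructure (μ lam η h ξx ξy : ℝ)
    (hh : 0 < h) (hμ : 0 < μ) (hlam : 0 < lam)
    (α β : ℝ) (hα : α = 1 + μ * lam * η ^ 2 / (3 * h ^ 3))
    (hβ : β = μ * lam / (3 * h) * (1 - 2 * η / h))
    (hξ : (ξx, ξy) ≠ (0, 0)) :
    (∀ Θ : ℝ, (FGsymbol Θ h α β ξx ξy).det = Θ ^ 3 * (Θ ^ 2 - α * h * (ξx ^ 2 + ξy ^ 2))) ∧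
    α * h * (ξx ^ 2 + ξy ^ 2) ≠ 0 ∧
    (FGsymbol (Real.sqrt (α * h) * Real.sqrt (ξx ^ 2 + ξy ^ 2)) h α β ξx ξy).mulVec
      ![-(Real.sqrt h * Real.sqrt (ξx ^ 2 + ξy ^ 2)), Real.sqrt α * ξx, Real.sqrt α * ξy, 0, 0]
      = 0 ∧
    (FGsymbol (-(Real.sqrt (α * h) * Real.sqrt (ξx ^ 2 + ξy ^ 2))) h α β ξx ξy).mulVec
      ![Real.sqrt h * Real.sqrt (ξx ^ 2 + ξy ^ 2), Real.sqrt α * ξx, Real.sqrt α * ξy, 0, 0]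
      = 0 := by

  have hα0 : 0 < α := by
    rw [hα]; positivity
  have hs : 0 < ξx ^ 2 + ξy ^ 2 := by
    rcases (not_and_or.mp (fun hc => hξ (Prod.ext hc.1 hc.2))) with hx | hy
    · positivity
    · positivity
  have sα : Real.sqrt α * Real.sqrt α = α := Real.mul_self_sqrt hα0.le
  have sh : Real.sqrt h * Real.sqrt h = h := Real.mul_self_sqrt hh.le
  have ss : Real.sqrt (ξx ^ 2 + ξy ^ 2) * Real.sqrt (ξx ^ 2 + ξy ^ 2) = ξx ^ 2 + ξy ^ 2 :=
    Real.mul_self_sqrt hs.le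
  have sab : Real.sqrt (α * h) = Real.sqrt α * Real.sqrt h := Real.sqrt_mul hα0.le h
  refine ⟨?_, ?_, ?_, ?_⟩
  · intro Θ
    simp [FGsymbol, Matrix.det_succ_row_zero, Fin.sum_univ_succ, Fin.succAbove,
      Matrix.cons_val_succ]
    ring
  · positivity
  · funext i
    fin_cases i <;>
      simp [FGsymbol, Matrix.mulVec, dotProduct, Fin.sum_univ_five, sab] <;>
      first
        | linear_combination (-(Real.sqrt α * Real.sqrt (ξx ^ 2 + ξy ^ 2) *
              Real.sqrt (ξx ^ 2 + ξy ^ 2))) * sh - Real.sqrt α * h * ss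
        | linear_combination (Real.sqrt h * Real.sqrt (ξx ^ 2 + ξy ^ 2) * ξx) * sα
        | linear_combination (Real.sqrt h * Real.sqrt (ξx ^ 2 + ξy ^ 2) * ξy) * sα
        | linear_combination (-(Real.sqrt h * Real.sqrt (ξx ^ 2 + ξy ^ 2) * ξx)) * sα
        | linear_combination (-(Real.sqrt h * Real.sqrt (ξx ^ 2 + ξy ^ 2) * ξy)) * sα
  · funext i
    fin_cases i <;>
      simp [FGsymbol, Matrix.mulVec, dotProduct, Fin.sum_univ_five, sab] <;>
      first
        | linear_combination (-(Real.sqrt α * Real.sqrt (ξx ^ 2 + ξy ^ 2) *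
              Real.sqrt (ξx ^ 2 + ξy ^ 2))) * sh - Real.sqrt α * h * ss
        | linear_combination (Real.sqrt h * Real.sqrt (ξx ^ 2 + ξy ^ 2) * ξx) * sα
        | linear_combination (Real.sqrt h * Real.sqrt (ξx ^ 2 + ξy ^ 2) * ξy) * sα
        | linear_combination (-(Real.sqrt h * Real.sqrt (ξx ^ 2 + ξy ^ 2) * ξx)) * sα
        | linear_combination (-(Real.sqrt h * Real.sqrt (ξx ^ 2 + ξy ^ 2) * ξy)) * sα
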